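/- Let P = (X, ≺) be a finite poset, let x ∈ X be a minimal element, and let t ≥ k ≥ 1 be integers. Then Ω(P,k) · Ω(P∖x, t) ≤ Ω(P,t) · Ω(P∖x, k). -/
import Mathlib

/-- The order polynomial `Ω(P,t)`: the number of order-preserving maps
`g : X → {1,…,t}`. -/
noncomputable def orderPoly (X : Type*) [Fintype X] [PartialOrder X] (t : ℕ) : ℕ :=
  Nat.card {g : X → Fin t // Monotone g}

open Finset
open scoped FinsetFamily

section aux

variable {X : Type*} [Fintype X] [PartialOrder X]

/-- Monotone maps into `Fin k` correspond to monotone maps into `Fin t`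
with all values `< k`. -/
def castEquiv {k t : ℕ} (hkt : k ≤ t) :
    {g : X → Fin k // Monotone g} ≃
      {g : X → Fin t // Monotone g ∧ ∀ y, (g y : ℕ) < k} where
  toFun g := ⟨fun y => Fin.castLE hkt (g.1 y),
    ⟨fun a b hab => by simpa only [Fin.le_def, Fin.coe_castLE] using g.2 hab,
      fun y => (g.1 y).2⟩⟩
  invFun g := ⟨fun y => ⟨(g.1 y : ℕ), g.2.2 y⟩,
    fun a b hab => by simpa only [Fin.le_def] using g.2.1 hab⟩
  left_inv g := rfl
  right_inv g := rfl

variable [DecidableEq X] {x : X}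

/-- Extension of a map on `X \ {x}` by `0` at `x`. -/
def ext0 {t : ℕ} (ht : 0 < t) (h : {z : X // z ≠ x} → Fin t) :
    X → Fin t :=
  fun y => if hy : y = x then ⟨0, ht⟩ else h ⟨y, hy⟩

omit [Fintype X] in
lemma ext0_monotone (hx : IsMin x) {t : ℕ} (ht : 0 < t)
    {h : {z : X // z ≠ x} → Fin t} (hmono : Monotone h) :
    Monotone (ext0 (x := x) ht h) := by
  intro a b hab
  by_cases ha : a = x
  · subst ha
    simp only [ext0, dif_pos rfl, Fin.le_def]
    exact Nat.zero_le _
  · have hb : b ≠ x := by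
      rintro rfl
      exact ha (le_antisymm hab (hx hab))
    simp only [ext0, dif_neg ha, dif_neg hb]
    exact hmono (show (⟨a, ha⟩ : {z : X // z ≠ x}) ≤ ⟨b, hb⟩ from hab)

/-- Monotone maps on `X \ {x}` (with `x` minimal) correspond to monotone maps
on `X` vanishing at `x`, possibly with an extra bound `< k` on values. -/
def extEquiv (hx : IsMin x) {k t : ℕ} (hkk : 0 < k) (hkt : k ≤ t) :
    {h : {z : X // z ≠ x} → Fin t // Monotone h ∧ ∀ y, (h y : ℕ) < k} ≃
      {g : X → Fin t // Monotone g ∧ (g x : ℕ) = 0 ∧ ∀ y, (g y : ℕ) < k} where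
  toFun h := ⟨ext0 (hkk.trans_le hkt) h.1,
    ⟨ext0_monotone hx _ h.2.1, by simp [ext0], fun y => by
      by_cases hy : y = x
      · subst hy; simpa [ext0] using hkk
      · simpa [ext0, hy] using h.2.2 ⟨y, hy⟩⟩⟩
  invFun g := ⟨fun z => g.1 z.1,
    ⟨fun a b hab => g.2.1 hab, fun z => g.2.2.2 z.1⟩⟩
  left_inv h := by
    ext z
    simp [ext0, z.2]
  right_inv g := by
    ext y
    by_cases hy : y = x
    · subst hy
      simp [ext0, Fin.ext_iff, ← g.2.2.1]
    · simp [ext0, hy]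

/-- Same, without the bound. -/
def extEquiv' (hx : IsMin x) {t : ℕ} (ht : 0 < t) :
    {h : {z : X // z ≠ x} → Fin t // Monotone h} ≃
      {g : X → Fin t // Monotone g ∧ (g x : ℕ) = 0} where
  toFun h := ⟨ext0 ht h.1, ⟨ext0_monotone hx _ h.2, by simp [ext0]⟩⟩
  invFun g := ⟨fun z => g.1 z.1, fun a b hab => g.2.1 hab⟩
  left_inv h := by
    ext z
    simp [ext0, z.2]
  right_inv g := by
    ext y
    by_cases hy : y = x
    · subst hy
      simp [ext0, Fin.ext_iff, ← g.2.2]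
    · simp [ext0, hy]

end aux

/-- For a minimal element `x` of a finite poset `P` and integers `t ≥ k ≥ 1`:
`Ω(P,k) · Ω(P∖x,t) ≤ Ω(P,t) · Ω(P∖x,k)`. -/
theorem orderPoly_ratio_remove_min (X : Type*) [Fintype X] [DecidableEq X]
    [PartialOrder X] (x : X) (hx : IsMin x)
    (k t : ℕ) (hk : 1 ≤ k) (hkt : k ≤ t) :
    orderPoly X k * orderPoly {z : X // z ≠ x} t ≤
      orderPoly X t * orderPoly {z : X // z ≠ x} k := by
  classical
  have ht : 0 < t := hk.trans hkt
  set L : Finset (X → Fin t) := univ.filter (fun g => Monotone g) with hLdef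
  set F : Finset (X → Fin t) :=
    univ.filter (fun g => Monotone g ∧ ∀ y, (g y : ℕ) < k) with hFdef
  set I : Finset (X → Fin t) :=
    univ.filter (fun g => Monotone g ∧ (g x : ℕ) = 0) with hIdef
  set FI : Finset (X → Fin t) :=
    univ.filter (fun g => Monotone g ∧ (g x : ℕ) = 0 ∧ ∀ y, (g y : ℕ) < k) with hFIdef
  have hcardF : orderPoly X k = #F := by
    rw [orderPoly, Nat.card_congr (castEquiv hkt), Nat.card_eq_fintype_card,
      Fintype.card_subtype]
  have hcardL : orderPoly X t = #L := by
    rw [orderPoly, Nat.card_eq_fintype_card, Fintype.card_subtype]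
  have hcardI : orderPoly {z : X // z ≠ x} t = #I := by
    rw [orderPoly, Nat.card_congr (extEquiv' hx ht), Nat.card_eq_fintype_card,
      Fintype.card_subtype]
  have hcardFI : orderPoly {z : X // z ≠ x} k = #FI := by
    rw [orderPoly, Nat.card_congr (castEquiv hkt),
      Nat.card_congr (extEquiv hx hk hkt), Nat.card_eq_fintype_card,
      Fintype.card_subtype]
  rw [hcardF, hcardL, hcardI, hcardFI]
  have key : #F * #I ≤ #(F ⊼ I) * #(F ⊻ I) := Finset.le_card_infs_mul_card_sups F I
  have hsub1 : F ⊼ I ⊆ FI := by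
    intro c hc
    rw [Finset.mem_infs] at hc
    obtain ⟨a, ha, b, hb, rfl⟩ := hc
    simp only [hFdef, hIdef, Finset.mem_filter, Finset.mem_univ, true_and] at ha hb
    simp only [hFIdef, Finset.mem_filter, Finset.mem_univ, true_and]
    refine ⟨ha.1.inf hb.1, ?_, fun y => ?_⟩
    · have : (a ⊓ b) x ≤ b x := inf_le_right
      rw [Fin.le_def] at this
      omega
    · have h1 : (a ⊓ b) y ≤ a y := inf_le_left
      rw [Fin.le_def] at h1
      have := ha.2 y
      omega
  have hsub2 : F ⊻ I ⊆ L := by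
    intro c hc
    rw [Finset.mem_sups] at hc
    obtain ⟨a, ha, b, hb, rfl⟩ := hc
    simp only [hFdef, hIdef, Finset.mem_filter, Finset.mem_univ, true_and] at ha hb
    simp only [hLdef, Finset.mem_filter, Finset.mem_univ, true_and]
    exact ha.1.sup hb.1
  calc #F * #I ≤ #(F ⊼ I) * #(F ⊻ I) := key
    _ ≤ #FI * #L :=
      Nat.mul_le_mul (Finset.card_le_card hsub1) (Finset.card_le_card hsub2)
    _ = #L * #FI := Nat.mul_comm _ _
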